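/- Let A be a nonnegatively graded connected k-algebra, M a ℤ-graded left A-module that is s-pure in degrees l_1 < ⋯ < l_s, and f : M → M' a surjective degree-preserving A-linear morphism of graded A-modules. Then M' is also s-pure in degrees l_1, …, l_s, and f is essential if and only if the induced maps f_{l_i} : M_{l_i} → M'_{l_i} on homogeneous components are injective for all i = 1, …, s. -/

import Mathlib

set_option linter.unusedSectionVars false
set_option maxHeartbeats 1000000


/-!
STATEMENT 2 (Proposition `prop:essentialineachdegree`): if `M` is `s`-pure in degrees
`l₁ < ⋯ < l_s` and `f : M → M'` is a surjective degree-preserving morphism of graded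
`A`-modules, then `M'` is `s`-pure in the same degrees, and `f` is essential iff the
induced maps on the homogeneous components of degrees `l₁, …, l_s` are injective.
-/

namespace Stmt2

variable {k A : Type} [Field k] [Ring A] [Algebra k A]

/-- `M` is `s`-pure in degrees `l 0 < l 1 < ⋯`: `M = Σᵢ A·M_{lᵢ}` and
`M_{lᵢ} ∩ (Σ_{j<i} A·M_{lⱼ}) = 0` for every `i`. -/
def IsPure {s : ℕ} {M : Type} [AddCommGroup M] [Module k M] [Module A M]
    [IsScalarTower k A M] (ℳ : ℤ → Submodule k M) (l : Fin s → ℤ) : Prop :=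
  (⨆ i : Fin s,
      (Submodule.span A (ℳ (l i) : Set M)).restrictScalars k) = ⊤ ∧
  ∀ i : Fin s, ℳ (l i) ⊓
      (⨆ j : Fin s, ⨆ _ : j < i,
        (Submodule.span A (ℳ (l j) : Set M)).restrictScalars k) = ⊥

/-- A surjective morphism `f : M → M'` of graded modules is *essential* if every
degree-preserving morphism `g : N → M` of graded `A`-modules such that `f ∘ g` is
surjective is itself surjective. -/
def IsEssential (𝒜 : ℤ → Submodule k A) {M M' : Type}
    [AddCommGroup M] [Module k M] [Module A M] [IsScalarTower k A M]
    [AddCommGroup M'] [Module k M'] [Module A M'] [IsScalarTower k A M']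
    (ℳ : ℤ → Submodule k M) (f : M →ₗ[A] M') : Prop :=
  ∀ (N : Type) (_ : AddCommGroup N) (_ : Module k N) (_ : Module A N)
    (_ : IsScalarTower k A N) (𝒩 : ℤ → Submodule k N)
    (_ : DirectSum.Decomposition 𝒩) (_ : SetLike.GradedSMul 𝒜 𝒩)
    (g : N →ₗ[A] M), (∀ (n : ℤ) (x : N), x ∈ 𝒩 n → g x ∈ ℳ n) →
      Function.Surjective (f ∘ g) → Function.Surjective g

section Aux

variable {M N : Type}
  [AddCommGroup M] [Module k M] [Module A M] [IsScalarTower k A M]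
  [AddCommGroup N] [Module k N] [Module A N] [IsScalarTower k A N]
  (𝒜 : ℤ → Submodule k A) [GradedAlgebra 𝒜]
  (ℳ : ℤ → Submodule k M) [DirectSum.Decomposition ℳ] [SetLike.GradedSMul 𝒜 ℳ]
  (𝒩 : ℤ → Submodule k N) [DirectSum.Decomposition 𝒩] [SetLike.GradedSMul 𝒜 𝒩]

/-- The `k`-linear projection onto the degree `n` component. -/
noncomputable def proj (n : ℤ) : M →ₗ[k] M :=
  (ℳ n).subtype ∘ₗ (DirectSum.component k ℤ (fun i => ℳ i) n) ∘ₗ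
    (DirectSum.decomposeLinearEquiv ℳ).toLinearMap

lemma proj_apply (n : ℤ) (x : M) : proj ℳ n x = (DirectSum.decompose ℳ x n : M) := rfl

lemma proj_mem (n : ℤ) (x : M) : proj ℳ n x ∈ ℳ n := (DirectSum.decompose ℳ x n).2

lemma proj_of_mem_same {n : ℤ} {x : M} (hx : x ∈ ℳ n) : proj ℳ n x = x :=
  DirectSum.decompose_of_mem_same ℳ hx

lemma proj_of_mem_ne {m n : ℤ} {x : M} (hx : x ∈ ℳ m) (h : m ≠ n) : proj ℳ n x = 0 :=
  DirectSum.decompose_of_mem_ne ℳ hx h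

/-- A graded morphism commutes with the projections. -/
lemma map_proj (h : N →ₗ[A] M) (hh : ∀ (n : ℤ) (x : N), x ∈ 𝒩 n → h x ∈ ℳ n)
    (x : N) (n : ℤ) : h (proj 𝒩 n x) = proj ℳ n (h x) := by
  induction x using DirectSum.Decomposition.inductionOn 𝒩 with
  | zero => simp
  | @homogeneous m y =>
      rcases eq_or_ne m n with rfl | hmn
      · rw [proj_of_mem_same 𝒩 y.2, proj_of_mem_same ℳ (hh m y y.2)]
      · rw [proj_of_mem_ne 𝒩 y.2 hmn, proj_of_mem_ne ℳ (hh m y y.2) hmn, map_zero]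
  | add y z hy hz => simp only [map_add, hy, hz]

/-- Projection of a homogeneous scalar multiple. -/
lemma proj_smul_of_mem {d : ℤ} {a : A} (ha : a ∈ 𝒜 d) (x : M) (n : ℤ) :
    proj ℳ n (a • x) = a • proj ℳ (n - d) x := by
  induction x using DirectSum.Decomposition.inductionOn ℳ with
  | zero => simp
  | @homogeneous m y =>
      have hmem : a • (y : M) ∈ ℳ (d + m) := SetLike.GradedSMul.smul_mem ha y.2
      rcases eq_or_ne (d + m) n with rfl | hdm
      · rw [proj_of_mem_same ℳ hmem]
        have h2 : (d + m) - d = m := by ring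
        rw [h2, proj_of_mem_same ℳ y.2]
      · rw [proj_of_mem_ne ℳ hmem hdm]
        have hne : m ≠ n - d := fun h => hdm (by omega)
        rw [proj_of_mem_ne ℳ y.2 hne, smul_zero]
  | add y z hy hz => rw [smul_add, map_add, hy, hz, map_add, smul_add]


/-- Master lemma about `A`-spans of `k`-subspaces of a single degree component. -/
lemma span_proj (hneg : ∀ n : ℤ, n < 0 → 𝒜 n = ⊥) (hconn : 𝒜 0 = (1 : Submodule k A))
    (e : ℤ) (V : Submodule k M) (hV : V ≤ ℳ e) {x : M}
    (hx : x ∈ Submodule.span A (V : Set M)) (n : ℤ) :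
    proj ℳ n x ∈ Submodule.span A (V : Set M) ∧
      (n < e → proj ℳ n x = 0) ∧ (n = e → proj ℳ n x ∈ V) := by
  classical
  induction hx using Submodule.span_induction generalizing n with
  | mem v hv =>
      rcases eq_or_ne e n with rfl | hne
      · rw [proj_of_mem_same ℳ (hV hv)]
        exact ⟨Submodule.subset_span hv, fun h => absurd h (lt_irrefl _), fun _ => hv⟩
      · rw [proj_of_mem_ne ℳ (hV hv) hne]
        exact ⟨Submodule.zero_mem _, fun _ => rfl, fun _ => Submodule.zero_mem _⟩
  | zero => simp
  | add y z hy hz ihy ihz =>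
      refine ⟨?_, fun h => ?_, fun h => ?_⟩
      · rw [map_add]; exact Submodule.add_mem _ (ihy n).1 (ihz n).1
      · rw [map_add, (ihy n).2.1 h, (ihz n).2.1 h, add_zero]
      · rw [map_add]; exact Submodule.add_mem _ ((ihy n).2.2 h) ((ihz n).2.2 h)
  | smul a y hy ihy =>
      have ha : a = ∑ d ∈ (DirectSum.decompose 𝒜 a).support,
          (DirectSum.decompose 𝒜 a d : A) := (DirectSum.sum_support_decompose 𝒜 a).symm
      have hsum : proj ℳ n (a • y) = ∑ d ∈ (DirectSum.decompose 𝒜 a).support,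
          (DirectSum.decompose 𝒜 a d : A) • proj ℳ (n - d) y := by
        conv_lhs => rw [ha, Finset.sum_smul, map_sum]
        exact Finset.sum_congr rfl fun d _ =>
          proj_smul_of_mem 𝒜 ℳ (DirectSum.decompose 𝒜 a d).2 y (n := n)
      refine ⟨?_, fun h => ?_, fun h => ?_⟩
      · rw [hsum]
        exact Submodule.sum_mem _ fun d _ =>
          Submodule.smul_mem _ _ (ihy (n - d)).1
      · rw [hsum]
        refine Finset.sum_eq_zero fun d _ => ?_
        rcases lt_or_ge d 0 with hd | hd
        · have : (DirectSum.decompose 𝒜 a d : A) ∈ (⊥ : Submodule k A) := by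
            rw [← hneg d hd]; exact (DirectSum.decompose 𝒜 a d).2
          rw [Submodule.mem_bot] at this
          rw [this, zero_smul]
        · rw [(ihy (n - d)).2.1 (by omega), smul_zero]
      · rw [hsum]
        refine Submodule.sum_mem _ fun d _ => ?_
        rcases lt_trichotomy d 0 with hd | rfl | hd
        · have : (DirectSum.decompose 𝒜 a d : A) ∈ (⊥ : Submodule k A) := by
            rw [← hneg d hd]; exact (DirectSum.decompose 𝒜 a d).2
          rw [Submodule.mem_bot] at this
          rw [this, zero_smul]
          exact Submodule.zero_mem _
        · have h0 : (DirectSum.decompose 𝒜 a 0 : A) ∈ (1 : Submodule k A) := by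
            rw [← hconn]; exact (DirectSum.decompose 𝒜 a 0).2
          rw [Submodule.one_eq_span, Submodule.mem_span_singleton] at h0
          obtain ⟨c, hc⟩ := h0
          rw [← hc, smul_assoc, one_smul]
          exact Submodule.smul_mem _ _ ((ihy (n - 0)).2.2 (by omega))
        · rw [(ihy (n - d)).2.1 (by omega), smul_zero]
          exact Submodule.zero_mem _

end Aux

theorem pure_image_and_essential_iff {M M' : Type} {s : ℕ}
    (𝒜 : ℤ → Submodule k A) [GradedAlgebra 𝒜]
    (hneg : ∀ n : ℤ, n < 0 → 𝒜 n = ⊥) (hconn : 𝒜 0 = (1 : Submodule k A))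
    [AddCommGroup M] [Module k M] [Module A M] [IsScalarTower k A M]
    [AddCommGroup M'] [Module k M'] [Module A M'] [IsScalarTower k A M']
    (ℳ : ℤ → Submodule k M) [DirectSum.Decomposition ℳ] [SetLike.GradedSMul 𝒜 ℳ]
    (ℳ' : ℤ → Submodule k M') [DirectSum.Decomposition ℳ'] [SetLike.GradedSMul 𝒜 ℳ']
    (l : Fin s → ℤ) (hl : StrictMono l)
    (f : M →ₗ[A] M') (hf : ∀ (n : ℤ) (x : M), x ∈ ℳ n → f x ∈ ℳ' n)
    (hsurj : Function.Surjective f)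
    (hpure : IsPure (A := A) ℳ l) :
    IsPure (A := A) ℳ' l ∧
      (IsEssential 𝒜 ℳ f ↔
        ∀ i : Fin s, ∀ x ∈ ℳ (l i), f x = 0 → x = 0) := by
  classical
  -- f maps the span of a component onto the span of the corresponding component
  have hcomp : ∀ e : ℤ, Submodule.map f (Submodule.span A ((ℳ e : Set M))) =
      Submodule.span A ((ℳ' e : Set M')) := by
    intro e
    rw [Submodule.map_span]
    congr 1
    apply Set.Subset.antisymm
    · rintro _ ⟨x, hx, rfl⟩; exact hf e x hx
    · intro y hy
      obtain ⟨x, rfl⟩ := hsurj y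
      exact ⟨proj ℳ e x, proj_mem ℳ e x,
        (map_proj ℳ' ℳ f hf x e).trans (proj_of_mem_same ℳ' hy)⟩
  -- Part 1a
  have part1a : (⨆ i : Fin s, (Submodule.span A (ℳ' (l i) : Set M')).restrictScalars k) = ⊤ := by
    rw [eq_top_iff]
    rintro y -
    obtain ⟨x, rfl⟩ := hsurj y
    have hx : x ∈ (⨆ i : Fin s, (Submodule.span A (ℳ (l i) : Set M)).restrictScalars k) := by
      rw [hpure.1]; trivial
    refine Submodule.iSup_induction
      (motive := fun m => f m ∈ ⨆ i : Fin s, (Submodule.span A (ℳ' (l i) : Set M')).restrictScalars k)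
      _ hx (fun i x hx => ?_) (by simp) (fun a b ha hb => by
        show f (a + b) ∈ _
        rw [map_add]; exact add_mem ha hb)
    have : f x ∈ Submodule.span A (ℳ' (l i) : Set M') := by
      rw [← hcomp (l i)]; exact Submodule.mem_map_of_mem hx
    exact Submodule.mem_iSup_of_mem i this
  -- Part 1b
  have part1b : ∀ i : Fin s, ℳ' (l i) ⊓
      (⨆ j : Fin s, ⨆ _ : j < i,
        (Submodule.span A (ℳ' (l j) : Set M')).restrictScalars k) = ⊥ := by
    intro i
    rw [eq_bot_iff]
    rintro y ⟨hy1, hy2⟩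
    have hpre : ∃ x ∈ (⨆ j : Fin s, ⨆ _ : j < i,
        (Submodule.span A (ℳ (l j) : Set M)).restrictScalars k), f x = y := by
      refine Submodule.iSup_induction
        (motive := fun y => ∃ x ∈ (⨆ j : Fin s, ⨆ _ : j < i,
          (Submodule.span A (ℳ (l j) : Set M)).restrictScalars k), f x = y)
        _ hy2 (fun j y hy => ?_) ⟨0, Submodule.zero_mem _, map_zero f⟩ ?_
      · by_cases h : j < i
        · rw [iSup_pos h] at hy
          have : y ∈ Submodule.map f (Submodule.span A ((ℳ (l j) : Set M))) := by
            rw [hcomp (l j)]; exact hy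
          obtain ⟨x, hx, rfl⟩ := this
          exact ⟨x, Submodule.mem_iSup_of_mem j (Submodule.mem_iSup_of_mem h hx), rfl⟩
        · rw [iSup_neg h] at hy
          rw [Submodule.mem_bot] at hy
          exact ⟨0, Submodule.zero_mem _, by rw [map_zero, hy]⟩
      · rintro a b ⟨xa, hxa, rfl⟩ ⟨xb, hxb, rfl⟩
        exact ⟨xa + xb, Submodule.add_mem _ hxa hxb, map_add f xa xb⟩
    obtain ⟨x, hx, rfl⟩ := hpre
    have hxi : proj ℳ (l i) x ∈ (⨆ j : Fin s, ⨆ _ : j < i,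
        (Submodule.span A (ℳ (l j) : Set M)).restrictScalars k) := by
      refine Submodule.iSup_induction
        (motive := fun x => proj ℳ (l i) x ∈ (⨆ j : Fin s, ⨆ _ : j < i,
          (Submodule.span A (ℳ (l j) : Set M)).restrictScalars k))
        _ hx (fun j x hx => ?_) (by simp) (fun a b ha hb => by
          show proj ℳ (l i) (a + b) ∈ _
          rw [map_add]; exact add_mem ha hb)
      by_cases h : j < i
      · rw [iSup_pos h] at hx
        exact Submodule.mem_iSup_of_mem j (Submodule.mem_iSup_of_mem h
          (span_proj 𝒜 ℳ hneg hconn (l j) (ℳ (l j)) le_rfl hx (l i)).1)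
      · rw [iSup_neg h] at hx
        rw [Submodule.mem_bot] at hx
        rw [hx, map_zero]; exact Submodule.zero_mem _
    have hzero : proj ℳ (l i) x = 0 := by
      have hmem : proj ℳ (l i) x ∈ ℳ (l i) ⊓ (⨆ j : Fin s, ⨆ _ : j < i,
          (Submodule.span A (ℳ (l j) : Set M)).restrictScalars k) :=
        ⟨proj_mem ℳ (l i) x, hxi⟩
      rw [hpure.2 i, Submodule.mem_bot] at hmem
      exact hmem
    rw [Submodule.mem_bot, ← proj_of_mem_same ℳ' hy1, ← map_proj ℳ' ℳ f hf x (l i),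
      hzero, map_zero]
  refine ⟨⟨part1a, part1b⟩, ?_, ?_⟩
  · -- essential → injective on components
    intro hess i x0 hx0 hfx0
    by_contra hx0ne
    -- a complement of k·x0 inside ℳ (l i)
    obtain ⟨V₀, hV₀⟩ := Submodule.exists_isCompl
      (Submodule.span k {(⟨x0, hx0⟩ : ℳ (l i))})
    set V : Submodule k M := V₀.map (ℳ (l i)).subtype with hVdef
    have hVle : V ≤ ℳ (l i) := Submodule.map_subtype_le _ _
    have hx0V : x0 ∉ V := by
      rintro ⟨v, hv, hveq⟩
      have hvx : v = ⟨x0, hx0⟩ := Subtype.ext hveq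
      have : v ∈ Submodule.span k {(⟨x0, hx0⟩ : ℳ (l i))} ⊓ V₀ :=
        ⟨hvx ▸ Submodule.mem_span_singleton_self _, hv⟩
      rw [hV₀.inf_eq_bot, Submodule.mem_bot] at this
      exact hx0ne (by simpa [this] using hveq.symm)
    have hdecomp : ∀ y, y ∈ ℳ (l i) → ∃ v ∈ V, ∃ c : k, y = v + c • x0 := by
      intro y hy
      have hmem : (⟨y, hy⟩ : ℳ (l i)) ∈
          Submodule.span k {(⟨x0, hx0⟩ : ℳ (l i))} ⊔ V₀ := by
        rw [hV₀.sup_eq_top]; trivial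
      obtain ⟨w, hw, v, hv, heq⟩ := Submodule.mem_sup.mp hmem
      obtain ⟨c, hc⟩ := Submodule.mem_span_singleton.mp hw
      refine ⟨v, Submodule.mem_map_of_mem hv, c, ?_⟩
      have := congrArg Subtype.val heq
      simp only [Submodule.coe_add] at this
      rw [← this, ← hc]
      simp [add_comm]
    -- the proper graded submodule N
    set Nsub : Submodule A M := Submodule.span A (V : Set M) ⊔
      (⨆ j : Fin s, ⨆ _ : j ≠ i, Submodule.span A ((ℳ (l j) : Set M))) with hNdef
    have hsupproj : ∀ z ∈ (⨆ j : Fin s, ⨆ _ : j ≠ i,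
        Submodule.span A ((ℳ (l j) : Set M))), ∀ n,
        proj ℳ n z ∈ (⨆ j : Fin s, ⨆ _ : j ≠ i,
          Submodule.span A ((ℳ (l j) : Set M))) := by
      intro z hz
      refine Submodule.iSup_induction
        (motive := fun z => ∀ n, proj ℳ n z ∈ (⨆ j : Fin s, ⨆ _ : j ≠ i,
          Submodule.span A ((ℳ (l j) : Set M)))) _ hz (fun j z hz n => ?_)
        (by simp) (fun a b ha hb n => by
          show proj ℳ n (a + b) ∈ _
          rw [map_add]; exact add_mem (ha n) (hb n))
      by_cases h : j ≠ i
      · rw [iSup_pos h] at hz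
        exact Submodule.mem_iSup_of_mem j (Submodule.mem_iSup_of_mem h
          (span_proj 𝒜 ℳ hneg hconn (l j) (ℳ (l j)) le_rfl hz n).1)
      · rw [iSup_neg h] at hz
        rw [Submodule.mem_bot] at hz
        rw [hz, map_zero]; exact Submodule.zero_mem _
    have hNproj : ∀ x ∈ Nsub, ∀ n, proj ℳ n x ∈ Nsub := by
      intro x hx n
      obtain ⟨w, hw, z, hz, rfl⟩ := Submodule.mem_sup.mp hx
      rw [map_add]
      exact Submodule.add_mem _
        (Submodule.mem_sup_left (span_proj 𝒜 ℳ hneg hconn (l i) V hVle hw n).1)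
        (Submodule.mem_sup_right (hsupproj z hz n))
    -- the grading on N
    set 𝒩 : ℤ → Submodule k Nsub := fun n =>
      (ℳ n).comap ((Nsub.subtype : Nsub →ₗ[A] M).restrictScalars k) with h𝒩def
    have hdecN : DirectSum.Decomposition 𝒩 := by
      have hindep : iSupIndep 𝒩 := by
        intro n
        rw [Submodule.disjoint_def]
        intro y hy1 hy2
        have hyM : (y : M) ∈ (⨆ m, ⨆ (_ : m ≠ n), ℳ m) := by
          refine Submodule.iSup_induction
            (motive := fun y : Nsub => (y : M) ∈ (⨆ m, ⨆ (_ : m ≠ n), ℳ m)) _ hy2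
            (fun m y hy => ?_) (by simp) (fun a b ha hb => by
              show ((a + b : Nsub) : M) ∈ _
              rw [Submodule.coe_add]; exact add_mem ha hb)
          by_cases h : m ≠ n
          · rw [iSup_pos h] at hy
            exact Submodule.mem_iSup_of_mem m (Submodule.mem_iSup_of_mem h hy)
          · rw [iSup_neg h] at hy
            rw [Submodule.mem_bot] at hy
            rw [hy, Submodule.coe_zero]; exact Submodule.zero_mem _
        have hdisj := (DirectSum.Decomposition.isInternal ℳ).submodule_iSupIndep n
        have : (y : M) = 0 := Submodule.disjoint_def.mp hdisj _ hy1 hyM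
        exact Subtype.ext this
      have hsup : (⨆ n, 𝒩 n) = ⊤ := by
        rw [eq_top_iff]
        rintro y -
        have hrepr := DirectSum.sum_support_decompose ℳ (y : M)
        have hyeq : y = ∑ n ∈ (DirectSum.decompose ℳ (y : M)).support,
            (⟨proj ℳ n (y : M), hNproj _ y.2 n⟩ : Nsub) := by
          apply Subtype.ext
          rw [Submodule.coe_sum]
          exact hrepr.symm
        rw [hyeq]
        exact Submodule.sum_mem _ fun n _ =>
          Submodule.mem_iSup_of_mem n (proj_mem ℳ n (y : M))
      exact (DirectSum.isInternal_submodule_of_iSupIndep_of_iSup_eq_top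
        hindep hsup).chooseDecomposition
    have hgsmul : SetLike.GradedSMul 𝒜 𝒩 := by
      constructor
      intro d e a y ha hy
      have hy' : (y : M) ∈ ℳ e := hy
      show ((a • y : Nsub) : M) ∈ ℳ (d + e)
      exact SetLike.GradedSMul.smul_mem ha hy'
    -- f ∘ inclusion is surjective
    have hgsurj : Function.Surjective (f ∘ Nsub.subtype) := by
      intro y'
      obtain ⟨x, rfl⟩ := hsurj y'
      suffices h : ∃ m ∈ Nsub, f m = f x by
        obtain ⟨m, hm, hfm⟩ := h
        exact ⟨⟨m, hm⟩, hfm⟩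
      have hx : x ∈ (⨆ i : Fin s, (Submodule.span A (ℳ (l i) : Set M)).restrictScalars k) := by
        rw [hpure.1]; trivial
      refine Submodule.iSup_induction
        (motive := fun x => ∃ m ∈ Nsub, f m = f x) _ hx (fun j x hx => ?_)
        ⟨0, Submodule.zero_mem _, rfl⟩ ?_
      · by_cases h : j = i
        · subst h
          induction hx using Submodule.span_induction with
          | mem y hy =>
              obtain ⟨v, hv, c, rfl⟩ := hdecomp y hy
              refine ⟨v, Submodule.mem_sup_left (Submodule.subset_span hv), ?_⟩
              rw [map_add, LinearMap.map_smul_of_tower, hfx0, smul_zero, add_zero]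
          | zero => exact ⟨0, Submodule.zero_mem _, rfl⟩
          | add y z _ _ ihy ihz =>
              obtain ⟨m1, hm1, hfm1⟩ := ihy
              obtain ⟨m2, hm2, hfm2⟩ := ihz
              exact ⟨m1 + m2, Submodule.add_mem _ hm1 hm2, by
                rw [map_add, map_add, hfm1, hfm2]⟩
          | smul a y _ ihy =>
              obtain ⟨m, hm, hfm⟩ := ihy
              exact ⟨a • m, Submodule.smul_mem _ _ hm, by
                rw [map_smul, map_smul, hfm]⟩
        · exact ⟨x, Submodule.mem_sup_right
            (Submodule.mem_iSup_of_mem j (Submodule.mem_iSup_of_mem h hx)), rfl⟩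
      · rintro a b ⟨ma, hma, hfa⟩ ⟨mb, hmb, hfb⟩
        exact ⟨ma + mb, Submodule.add_mem _ hma hmb, by
          rw [map_add, map_add, hfa, hfb]⟩
    -- apply essentiality
    have hNsurj : Function.Surjective (Nsub.subtype : Nsub →ₗ[A] M) :=
      hess Nsub inferInstance inferInstance inferInstance
        ⟨fun c a x => Subtype.ext (smul_assoc c a (x : M))⟩ 𝒩 hdecN hgsmul Nsub.subtype (fun n x hx => hx) hgsurj
    have hx0N : x0 ∈ Nsub := by
      obtain ⟨y, hy⟩ := hNsurj x0
      exact hy ▸ y.2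
    -- derive the contradiction
    obtain ⟨w, hw, z, hz, hxeq⟩ := Submodule.mem_sup.mp hx0N
    have hzi : proj ℳ (l i) z ∈ (⨆ j : Fin s, ⨆ _ : j < i,
        (Submodule.span A (ℳ (l j) : Set M)).restrictScalars k) := by
      refine Submodule.iSup_induction
        (motive := fun z => proj ℳ (l i) z ∈ (⨆ j : Fin s, ⨆ _ : j < i,
          (Submodule.span A (ℳ (l j) : Set M)).restrictScalars k)) _ hz
        (fun j z hz => ?_) (by simp) (fun a b ha hb => by
          show proj ℳ (l i) (a + b) ∈ _
          rw [map_add]; exact add_mem ha hb)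
      by_cases h : j ≠ i
      · rcases lt_or_gt_of_ne h with hlt | hgt
        · rw [iSup_pos (fun hh => h hh)] at hz
          exact Submodule.mem_iSup_of_mem j (Submodule.mem_iSup_of_mem hlt
            (span_proj 𝒜 ℳ hneg hconn (l j) (ℳ (l j)) le_rfl hz (l i)).1)
        · rw [iSup_pos (fun hh => h hh)] at hz
          rw [(span_proj 𝒜 ℳ hneg hconn (l j) (ℳ (l j)) le_rfl hz (l i)).2.1 (hl hgt)]
          exact Submodule.zero_mem _
      · rw [iSup_neg h] at hz
        rw [Submodule.mem_bot] at hz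
        rw [hz, map_zero]; exact Submodule.zero_mem _
    have hwi : proj ℳ (l i) w ∈ V :=
      (span_proj 𝒜 ℳ hneg hconn (l i) V hVle hw (l i)).2.2 rfl
    have hx0eq : x0 = proj ℳ (l i) w + proj ℳ (l i) z := by
      rw [← map_add, hxeq, proj_of_mem_same ℳ hx0]
    have hzmem : proj ℳ (l i) z ∈ ℳ (l i) ⊓ (⨆ j : Fin s, ⨆ _ : j < i,
        (Submodule.span A (ℳ (l j) : Set M)).restrictScalars k) :=
      ⟨proj_mem ℳ (l i) z, hzi⟩
    rw [hpure.2 i, Submodule.mem_bot] at hzmem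
    rw [hzmem, add_zero] at hx0eq
    exact hx0V (hx0eq ▸ hwi)
  · -- injective on components → essential
    intro hinj
    intro NT i1 i2 i3 i4 𝒩 i5 i6 g hg hfg
    letI := i1; letI := i2; letI := i3; letI := i4; letI := i5; letI := i6
    rw [← LinearMap.range_eq_top, eq_top_iff]
    rintro x -
    have hx : x ∈ (⨆ i : Fin s, (Submodule.span A (ℳ (l i) : Set M)).restrictScalars k) := by
      rw [hpure.1]; trivial
    refine Submodule.iSup_induction
      (motive := fun x => x ∈ LinearMap.range g) _ hx (fun j x hx => ?_)
      (Submodule.zero_mem _) (fun a b ha hb => Submodule.add_mem _ ha hb)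
    have hsub : (ℳ (l j) : Set M) ⊆ (LinearMap.range g : Submodule A M) := by
      intro m hm
      obtain ⟨n, hn⟩ := hfg (f m)
      have hn' : f (g n) = f m := hn
      set m' := g (proj 𝒩 (l j) n) with hm'def
      have hm' : m' ∈ ℳ (l j) := hg _ _ (proj_mem 𝒩 (l j) n)
      have hfm' : f m' = f m := by
        have h1 : (f ∘ₗ g) (proj 𝒩 (l j) n) = proj ℳ' (l j) ((f ∘ₗ g) n) :=
          map_proj ℳ' 𝒩 (f ∘ₗ g) (fun d x hx => hf d _ (hg d x hx)) n (l j)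
        simp only [LinearMap.comp_apply] at h1
        rw [hm'def, h1, hn', proj_of_mem_same ℳ' (hf _ _ hm)]
      have hmm : m = m' := by
        have : m - m' = 0 :=
          hinj j _ (Submodule.sub_mem _ hm hm') (by rw [map_sub, hfm', sub_self])
        rwa [sub_eq_zero] at this
      rw [SetLike.mem_coe, hmm, hm'def]
      exact LinearMap.mem_range_self g _
    exact Submodule.span_le.mpr hsub hx


end Stmt2
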